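/- arXiv:2004.09744 — 6 statements merged into one kernel-verified Lean document; each statement's English description precedes it below -/
import Mathlib

section
/- Let r, θ, ψ : ℝ → ℝ be differentiable functions with r(t) > 0 for all t, satisfying the polar kinematics relative to a stationary hazard: ṙ(t) = cos(ψ(t) − θ(t)), θ̇(t) = sin(ψ(t) − θ(t))/r(t), and ψ̇(t) = u(t), where u : ℝ → ℝ is the aircraft's turn-rate control. Then r is twice differentiable with r̈(t) = sin²(ψ(t) − θ(t))/r(t) − u(t)·sin(ψ(t) − θ(t)). Consequently, for every t with u(t) ∈ [−1, 1], r̈(t) ≤ sin²(ψ(t) − θ(t))/r(t) + |sin(ψ(t) − θ(t))|, and equality holds when u(t) = −sign(sin(ψ(t) − θ(t))). In other words, the bearing-only strategy u(t) = −sign(sin(ψ(t) − θ(t))) maximises the instantaneous range acceleration r̈(t) over all controls u(t) ∈ [−1, 1]. -/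
/-- **Proposition 1 (stationary hazard).**
An aircraft moves at unit speed with heading `ψ` and turn-rate control `u`; a hazard is
stationary at the origin.  In polar coordinates centred at the hazard
(`r` = range, `θ` = bearing of the aircraft from the hazard) the kinematics are
`ṙ = cos (ψ - θ)`, `θ̇ = sin (ψ - θ) / r`, `ψ̇ = u`.
Then `r̈ = sin² (ψ - θ) / r - u · sin (ψ - θ)`; for every `u t ∈ [-1, 1]` we have
`r̈ ≤ sin² (ψ - θ) / r + |sin (ψ - θ)|`, with equality for the bearing-only strategy
`u = -sign (sin (ψ - θ))`. -/
theorem bearing_only_maximises_range_acceleration_stationary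
    (r θ ψ u : ℝ → ℝ)
    (hr : ∀ t, 0 < r t)
    (hdr : ∀ t, HasDerivAt r (Real.cos (ψ t - θ t)) t)
    (hdθ : ∀ t, HasDerivAt θ (Real.sin (ψ t - θ t) / r t) t)
    (hdψ : ∀ t, HasDerivAt ψ (u t) t) :
    (∀ t, HasDerivAt (deriv r)
        (Real.sin (ψ t - θ t) ^ 2 / r t - u t * Real.sin (ψ t - θ t)) t) ∧
    (∀ t, u t ∈ Set.Icc (-1 : ℝ) 1 →
        deriv (deriv r) t ≤ Real.sin (ψ t - θ t) ^ 2 / r t + |Real.sin (ψ t - θ t)|) ∧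
    (∀ t, u t = -Real.sign (Real.sin (ψ t - θ t)) →
        deriv (deriv r) t = Real.sin (ψ t - θ t) ^ 2 / r t + |Real.sin (ψ t - θ t)|) := by
  have hderiv : deriv r = fun t => Real.cos (ψ t - θ t) := funext fun t => (hdr t).deriv
  have key : ∀ t, HasDerivAt (deriv r)
      (Real.sin (ψ t - θ t) ^ 2 / r t - u t * Real.sin (ψ t - θ t)) t := by
    intro t
    have h1 : HasDerivAt (fun s => ψ s - θ s) (u t - Real.sin (ψ t - θ t) / r t) t :=
      (hdψ t).sub (hdθ t)
    have h2 : HasDerivAt (fun s => Real.cos (ψ s - θ s))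
        (-Real.sin (ψ t - θ t) * (u t - Real.sin (ψ t - θ t) / r t)) t :=
      h1.cos
    rw [hderiv]
    convert h2 using 1
    have hrt := (hr t).ne'
    field_simp
    ring
  refine ⟨key, ?_, ?_⟩
  · intro t ⟨hu1, hu2⟩
    rw [(key t).deriv]
    have hb : -(u t * Real.sin (ψ t - θ t)) ≤ |Real.sin (ψ t - θ t)| := by
      rw [← abs_neg]
      calc -(u t * Real.sin (ψ t - θ t)) ≤ |u t * Real.sin (ψ t - θ t)| := neg_le_abs _
        _ = |u t| * |Real.sin (ψ t - θ t)| := abs_mul _ _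
        _ ≤ 1 * |Real.sin (ψ t - θ t)| := by
            apply mul_le_mul_of_nonneg_right _ (abs_nonneg _)
            exact abs_le.mpr ⟨hu1, hu2⟩
        _ = |Real.sin (ψ t - θ t)| := one_mul _
      rw [abs_neg]
    linarith
  · intro t hu
    rw [(key t).deriv, hu]
    have : Real.sign (Real.sin (ψ t - θ t)) * Real.sin (ψ t - θ t)
        = |Real.sin (ψ t - θ t)| := by
      rcases lt_trichotomy (Real.sin (ψ t - θ t)) 0 with h | h | h
      · rw [Real.sign_of_neg h, abs_of_neg h]; ring
      · rw [h, abs_zero, mul_zero]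
      · rw [Real.sign_of_pos h, abs_of_pos h, one_mul]
    linarith [this]
end

section
/- Let v_h ≥ 0 and ω_h ≥ 0 be constants, and let r, θ, ψ : ℝ → ℝ be differentiable with r(t) > 0 for all t, satisfying the relative planar kinematics ṙ(t) = −cos θ(t) + v_h cos(ψ(t) − θ(t)), θ̇(t) = −u_a(t) + [sin θ(t) + v_h sin(ψ(t) − θ(t))]/r(t), and ψ̇(t) = −u_a(t) + ω_h·ǔ_h(t), where u_a : ℝ → ℝ is the aircraft control and ǔ_h : ℝ → ℝ is the hazard's turn-direction control. Then r is twice differentiable with r̈(t) = −u_a(t)·sin θ(t) + [sin θ(t) + v_h sin(ψ(t) − θ(t))]²/r(t) − v_h·ω_h·ǔ_h(t)·sin(ψ(t) − θ(t)). Consequently, for every t with u_a(t) ∈ [−1, 1], r̈(t) ≤ |sin θ(t)| + [sin θ(t) + v_h sin(ψ(t) − θ(t))]²/r(t) − v_h·ω_h·ǔ_h(t)·sin(ψ(t) − θ(t)), and equality holds when u_a(t) = −sign(sin θ(t)). In other words, regardless of the hazard's control ǔ_h, the bearing-only strategy u_a(t) = −sign(sin θ(t)) maximises the instantaneous range acceleration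 r̈(t) over all aircraft controls u_a(t) ∈ [−1, 1]. -/
/-- **Proposition 2 (hazard with finite turn rate).**
In the frame attached to the unit-speed aircraft (normalised maximum turn rate 1), the
relative kinematics with a hazard of speed `v_h ≥ 0` and maximum turn rate `ω_h ≥ 0` are
`ṙ = -cos θ + v_h cos (ψ - θ)`,
`θ̇ = -u_a + (sin θ + v_h sin (ψ - θ)) / r`,
`ψ̇ = -u_a + ω_h · ǔ_h`.
Then `r̈ = -u_a sin θ + (sin θ + v_h sin (ψ - θ))² / r - v_h ω_h ǔ_h sin (ψ - θ)`;
for every `u_a t ∈ [-1, 1]` the range acceleration is at most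
`|sin θ| + (sin θ + v_h sin (ψ - θ))² / r - v_h ω_h ǔ_h sin (ψ - θ)`, with equality for the
bearing-only strategy `u_a = -sign (sin θ)`. -/
theorem bearing_only_maximises_range_acceleration_finite_turn_rate
    (v_h ω_h : ℝ) (hvh : 0 ≤ v_h) (hωh : 0 ≤ ω_h)
    (r θ ψ u_a uh : ℝ → ℝ)
    (hr : ∀ t, 0 < r t)
    (hdr : ∀ t, HasDerivAt r (-Real.cos (θ t) + v_h * Real.cos (ψ t - θ t)) t)
    (hdθ : ∀ t, HasDerivAt θ
        (-u_a t + (Real.sin (θ t) + v_h * Real.sin (ψ t - θ t)) / r t) t)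
    (hdψ : ∀ t, HasDerivAt ψ (-u_a t + ω_h * uh t) t) :
    (∀ t, HasDerivAt (deriv r)
        (-u_a t * Real.sin (θ t)
          + (Real.sin (θ t) + v_h * Real.sin (ψ t - θ t)) ^ 2 / r t
          - v_h * ω_h * uh t * Real.sin (ψ t - θ t)) t) ∧
    (∀ t, u_a t ∈ Set.Icc (-1 : ℝ) 1 →
        deriv (deriv r) t ≤ |Real.sin (θ t)|
          + (Real.sin (θ t) + v_h * Real.sin (ψ t - θ t)) ^ 2 / r t
          - v_h * ω_h * uh t * Real.sin (ψ t - θ t)) ∧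
    (∀ t, u_a t = -Real.sign (Real.sin (θ t)) →
        deriv (deriv r) t = |Real.sin (θ t)|
          + (Real.sin (θ t) + v_h * Real.sin (ψ t - θ t)) ^ 2 / r t
          - v_h * ω_h * uh t * Real.sin (ψ t - θ t)) := by
  have hderiv : deriv r = fun t => -Real.cos (θ t) + v_h * Real.cos (ψ t - θ t) :=
    funext fun t => (hdr t).deriv
  have key : ∀ t, HasDerivAt (deriv r)
      (-u_a t * Real.sin (θ t)
        + (Real.sin (θ t) + v_h * Real.sin (ψ t - θ t)) ^ 2 / r t
        - v_h * ω_h * uh t * Real.sin (ψ t - θ t)) t := by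
    intro t
    rw [hderiv]
    set S := Real.sin (θ t) + v_h * Real.sin (ψ t - θ t) with hS
    have h1 : HasDerivAt (fun t => -Real.cos (θ t) + v_h * Real.cos (ψ t - θ t))
        ((Real.sin (θ t)) * (-u_a t + S / r t)
          + v_h * (-Real.sin (ψ t - θ t) * ((-u_a t + ω_h * uh t) - (-u_a t + S / r t)))) t := by
      have hcos : HasDerivAt (fun t => -Real.cos (θ t))
          (Real.sin (θ t) * (-u_a t + S / r t)) t := by
        have := ((Real.hasDerivAt_cos (θ t)).comp t (hdθ t)).neg
        simp [mul_comm, neg_mul] at this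
        exact this
      have hψθ : HasDerivAt (fun t => ψ t - θ t)
          ((-u_a t + ω_h * uh t) - (-u_a t + S / r t)) t := (hdψ t).sub (hdθ t)
      have hcos2 : HasDerivAt (fun t => v_h * Real.cos (ψ t - θ t))
          (v_h * (-Real.sin (ψ t - θ t) * ((-u_a t + ω_h * uh t) - (-u_a t + S / r t)))) t := by
        have := ((Real.hasDerivAt_cos (ψ t - θ t)).comp t hψθ).const_mul v_h
        simpa [mul_comm, mul_assoc, neg_mul] using this
      exact hcos.add hcos2
    convert h1 using 1
    have hrne : r t ≠ 0 := (hr t).ne'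
    field_simp
    ring
  refine ⟨key, ?_, ?_⟩
  · intro t ht
    rw [(key t).deriv]
    have h1 : -u_a t * Real.sin (θ t) ≤ |Real.sin (θ t)| := by
      calc -u_a t * Real.sin (θ t) ≤ |(-u_a t) * Real.sin (θ t)| := le_abs_self _
        _ = |u_a t| * |Real.sin (θ t)| := by rw [abs_mul, abs_neg]
        _ ≤ 1 * |Real.sin (θ t)| := by
            apply mul_le_mul_of_nonneg_right _ (abs_nonneg _)
            exact abs_le.mpr ⟨ht.1, ht.2⟩
        _ = |Real.sin (θ t)| := one_mul _
    linarith
  · intro t ht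
    rw [(key t).deriv, ht]
    have : - -Real.sign (Real.sin (θ t)) * Real.sin (θ t) = |Real.sin (θ t)| := by
      rcases lt_trichotomy (Real.sin (θ t)) 0 with h | h | h
      · rw [Real.sign_of_neg h, abs_of_neg h]; ring
      · simp [h]
      · rw [Real.sign_of_pos h, abs_of_pos h]; ring
    rw [this]
end

section
/- Let u ∈ {−1, 1} and let x̃, ỹ, ũ, v_h ∈ ℝ be constants. Define x, y : ℝ → ℝ by x(τ) = u·(1 − cos τ) + x̃·cos τ + u·ỹ·sin τ − v_h·τ·sin(ũ + u·τ) and y(τ) = (1 − u·x̃)·sin τ + ỹ·cos τ − v_h·τ·cos(ũ + u·τ). Then x(0) = x̃, y(0) = ỹ, and for all τ, x′(τ) = u·y(τ) − v_h·sin(ũ + u·τ) and y′(τ) = 1 − u·x(τ) − v_h·cos(ũ + u·τ). -/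
/-- **Closed-form optimal trajectories in regular regions (paper's (19)).**
With constant aircraft control `u = ±1`, constants `x̃, ỹ, ũ, v_h`, the functions
`x τ = u(1 - cos τ) + x̃ cos τ + u ỹ sin τ - v_h τ sin (ũ + u τ)` and
`y τ = (1 - u x̃) sin τ + ỹ cos τ - v_h τ cos (ũ + u τ)` satisfy `x 0 = x₀`, `y 0 = ỹ`,
`x' τ = u · y τ - v_h sin (ũ + u τ)` and `y' τ = 1 - u · x τ - v_h cos (ũ + u τ)`. -/
theorem optimal_trajectories_regular_region
    (u : ℝ) (hu : u = -1 ∨ u = 1) (x₀ y₀ u₀ v_h : ℝ)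
    (x y : ℝ → ℝ)
    (hx : ∀ τ, x τ = u * (1 - Real.cos τ) + x₀ * Real.cos τ + u * y₀ * Real.sin τ
        - v_h * τ * Real.sin (u₀ + u * τ))
    (hy : ∀ τ, y τ = (1 - u * x₀) * Real.sin τ + y₀ * Real.cos τ
        - v_h * τ * Real.cos (u₀ + u * τ)) :
    x 0 = x₀ ∧ y 0 = y₀ ∧
    (∀ τ, HasDerivAt x (u * y τ - v_h * Real.sin (u₀ + u * τ)) τ) ∧
    (∀ τ, HasDerivAt y (1 - u * x τ - v_h * Real.cos (u₀ + u * τ)) τ) := by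
  have hu2 : u * u = 1 := by rcases hu with h | h <;> subst h <;> norm_num
  have hxf : x = fun τ => u * (1 - Real.cos τ) + x₀ * Real.cos τ + u * y₀ * Real.sin τ
      - v_h * τ * Real.sin (u₀ + u * τ) := funext hx
  have hyf : y = fun τ => (1 - u * x₀) * Real.sin τ + y₀ * Real.cos τ
      - v_h * τ * Real.cos (u₀ + u * τ) := funext hy
  have harg : ∀ τ : ℝ, HasDerivAt (fun τ => u₀ + u * τ) u τ := fun τ => by
    simpa using ((hasDerivAt_id τ).const_mul u).const_add u₀
  refine ⟨by simp [hx 0], by simp [hy 0], ?_, ?_⟩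
  · intro τ
    have h1 : HasDerivAt (fun τ => u * (1 - Real.cos τ) + x₀ * Real.cos τ
        + u * y₀ * Real.sin τ - v_h * τ * Real.sin (u₀ + u * τ))
        (u * Real.sin τ + x₀ * (-Real.sin τ) + u * y₀ * Real.cos τ
          - (v_h * Real.sin (u₀ + u * τ) + v_h * τ * (Real.cos (u₀ + u * τ) * u))) τ := by
      have hs : HasDerivAt (fun τ : ℝ => Real.sin (u₀ + u * τ))
          (Real.cos (u₀ + u * τ) * u) τ := (Real.hasDerivAt_sin _).comp τ (harg τ)
      have hp : HasDerivAt (fun τ : ℝ => v_h * τ * Real.sin (u₀ + u * τ))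
          (v_h * Real.sin (u₀ + u * τ) + v_h * τ * (Real.cos (u₀ + u * τ) * u)) τ := by
        simpa [mul_comm, mul_left_comm, mul_assoc] using
          (((hasDerivAt_id τ).const_mul v_h).fun_mul hs)
      have hc : HasDerivAt (fun τ : ℝ => u * (1 - Real.cos τ)) (u * Real.sin τ) τ := by
        simpa using ((Real.hasDerivAt_cos τ).const_sub 1).const_mul u
      exact ((hc.add ((Real.hasDerivAt_cos τ).const_mul x₀)).add
        ((Real.hasDerivAt_sin τ).const_mul (u * y₀))).sub hp
    rw [hxf]
    convert h1 using 1
    rw [hy τ]; linear_combination (-(x₀ * Real.sin τ)) * hu2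
  · intro τ
    have h1 : HasDerivAt (fun τ => (1 - u * x₀) * Real.sin τ + y₀ * Real.cos τ
        - v_h * τ * Real.cos (u₀ + u * τ))
        ((1 - u * x₀) * Real.cos τ + y₀ * (-Real.sin τ)
          - (v_h * Real.cos (u₀ + u * τ) + v_h * τ * (-Real.sin (u₀ + u * τ) * u))) τ := by
      have hc : HasDerivAt (fun τ : ℝ => Real.cos (u₀ + u * τ))
          (-Real.sin (u₀ + u * τ) * u) τ := (Real.hasDerivAt_cos _).comp τ (harg τ)
      have hp : HasDerivAt (fun τ : ℝ => v_h * τ * Real.cos (u₀ + u * τ))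
          (v_h * Real.cos (u₀ + u * τ) + v_h * τ * (-Real.sin (u₀ + u * τ) * u)) τ := by
        simpa [mul_comm, mul_left_comm, mul_assoc] using
          (((hasDerivAt_id τ).const_mul v_h).fun_mul hc)
      exact (((Real.hasDerivAt_sin τ).const_mul (1 - u * x₀)).add
        ((Real.hasDerivAt_cos τ).const_mul y₀)).sub hp
    rw [hyf]
    convert h1 using 1
    rw [hx τ]; linear_combination (-1 + Real.cos τ - y₀ * Real.sin τ) * hu2
end

section
/- Let μ > 0 and u_h, x, y, v_h, V_x, V_y ∈ ℝ with V_x = −μ·sin u_h and V_y = −μ·cos u_h. Suppose the switching function vanishes, V_y·x − V_x·y = 0, and its derivative vanishes, V_x·(v_h·cos u_h − 1) − V_y·v_h·sin u_h = 0. Then x = 0. -/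
/-- **The only singular arc is the line `x = 0` (paper's (25)–(28)).**
If `V_x = -μ sin u_h`, `V_y = -μ cos u_h` with `μ > 0`, and both the switching function
`σ = V_y x - V_x y` and its derivative `V_x (v_h cos u_h - 1) - V_y v_h sin u_h` vanish,
then `x = 0`. -/
theorem singular_arc_only_on_y_axis
    (μ u_h x y v_h Vx Vy : ℝ) (hμ : 0 < μ)
    (hVx : Vx = -μ * Real.sin u_h) (hVy : Vy = -μ * Real.cos u_h)
    (hσ : Vy * x - Vx * y = 0)
    (hσ' : Vx * (v_h * Real.cos u_h - 1) - Vy * (v_h * Real.sin u_h) = 0) :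
    x = 0 := by
  subst hVx hVy
  have hs : Real.sin u_h = 0 := by
    have := Real.sin_sq_add_cos_sq u_h
    nlinarith [hσ']
  have hc : Real.cos u_h ^ 2 = 1 := by
    have := Real.sin_sq_add_cos_sq u_h
    nlinarith
  have hcne : Real.cos u_h ≠ 0 := by
    intro h; rw [h] at hc; norm_num at hc
  have hx : -μ * Real.cos u_h * x = 0 := by
    rw [hs] at hσ; linarith [hσ]
  have : -μ * Real.cos u_h ≠ 0 := by
    have : μ ≠ 0 := ne_of_gt hμ
    field_simp
    exact neg_ne_zero.mpr (mul_ne_zero this hcne)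
  exact by
    rcases mul_eq_zero.mp hx with h | h
    · exact absurd h this
    · exact h
end

section
/- Let v_h ∈ ℝ be a constant and let V_x, V_y, x, y, u_a, u_h : ℝ → ℝ with V_x, V_y, x, y differentiable, satisfying V_x′ = −u_a·V_y, V_y′ = u_a·V_x, x′ = −u_a·y + v_h·sin u_h, and y′ = −1 + u_a·x + v_h·cos u_h. Then the switching function σ := V_y·x − V_x·y is differentiable with σ′(t) = V_x(t)·(1 − v_h·cos u_h(t)) + V_y(t)·v_h·sin u_h(t). In particular, at a time t where V_x(t) = sin θ, V_y(t) = cos θ and u_h(t) = θ + π for some θ ∈ ℝ, one has σ′(t) = sin θ. -/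
/-- **Derivative of the switching function (paper's (26) and (30)).**
With `V_x' = -u_a V_y`, `V_y' = u_a V_x`, `x' = -u_a y + v_h sin u_h`,
`y' = -1 + u_a x + v_h cos u_h`, the switching function `σ = V_y x - V_x y` satisfies
`σ' = V_x (1 - v_h cos u_h) + V_y v_h sin u_h`.  In particular, at a time where
`V_x = sin θ`, `V_y = cos θ` and `u_h = θ + π`, one has `σ' = sin θ`. -/
theorem switching_function_derivative
    (v_h : ℝ) (Vx Vy x y u_a u_h : ℝ → ℝ)
    (hVx : ∀ t, HasDerivAt Vx (-u_a t * Vy t) t)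
    (hVy : ∀ t, HasDerivAt Vy (u_a t * Vx t) t)
    (hx : ∀ t, HasDerivAt x (-u_a t * y t + v_h * Real.sin (u_h t)) t)
    (hy : ∀ t, HasDerivAt y (-1 + u_a t * x t + v_h * Real.cos (u_h t)) t) :
    (∀ t, HasDerivAt (fun s => Vy s * x s - Vx s * y s)
        (Vx t * (1 - v_h * Real.cos (u_h t)) + Vy t * v_h * Real.sin (u_h t)) t) ∧
    (∀ t θ, Vx t = Real.sin θ → Vy t = Real.cos θ → u_h t = θ + Real.pi →
        deriv (fun s => Vy s * x s - Vx s * y s) t = Real.sin θ) := by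
  have key : ∀ t, HasDerivAt (fun s => Vy s * x s - Vx s * y s)
      (Vx t * (1 - v_h * Real.cos (u_h t)) + Vy t * v_h * Real.sin (u_h t)) t := by
    intro t
    have h := ((hVy t).mul (hx t)).sub ((hVx t).mul (hy t))
    exact h.congr_deriv (by ring)
  refine ⟨key, fun t θ h1 h2 h3 => ?_⟩
  rw [(key t).deriv, h1, h2, h3, Real.cos_add_pi, Real.sin_add_pi]
  ring
end

section
/- Let R, V_a, V_h, W : ℝ → ℝ³ (with the standard Euclidean inner product, norm, and cross product ×), with R and V_a differentiable, R′(t) = V_h(t) − V_a(t), V_a′(t) = W(t) × V_a(t), R(t) ≠ 0 and V_a(t) ≠ 0 for all t. Write r(t) = ‖R(t)‖, v_a = ‖V_a(t)‖ (constant by the normal-acceleration dynamics), v_h(t) = ‖V_h(t)‖, and let θ(t), φ(t), ψ(t) be the undirected angles between V_a(t) and R(t), between V_h(t) and R(t), and between V_a(t) and V_h(t), respectively. Then at every time t with sin θ(t) ≠ 0, θ is differentiable and θ̇(t) = (1/(r(t)·sin θ(t)))·[v_a·sin²θ(t) + v_h(t)·(cos φ(t)·cos θ(t) − cos ψ(t))]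 − (1/sin θ(t))·⟨W(t), (V_a(t)/‖V_a(t)‖) × (R(t)/‖R(t)‖)⟩. -/
open scoped RealInnerProductSpace


/-- The three-dimensional cross product on `EuclideanSpace ℝ (Fin 3)`. -/
noncomputable def cross3 (a b : EuclideanSpace ℝ (Fin 3)) : EuclideanSpace ℝ (Fin 3) :=
  (WithLp.equiv 2 (Fin 3 → ℝ)).symm
    ![a 1 * b 2 - a 2 * b 1, a 2 * b 0 - a 0 * b 2, a 0 * b 1 - a 1 * b 0]

lemma inner_cross3 (x a b : EuclideanSpace ℝ (Fin 3)) :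
    ⟪x, cross3 a b⟫ = x 0 * (a 1 * b 2 - a 2 * b 1) + x 1 * (a 2 * b 0 - a 0 * b 2)
      + x 2 * (a 0 * b 1 - a 1 * b 0) := by
  simp [cross3, PiLp.inner_apply, Fin.sum_univ_three]; ring

lemma cross3_inner_cycle (w a b : EuclideanSpace ℝ (Fin 3)) :
    ⟪cross3 w a, b⟫ = ⟪w, cross3 a b⟫ := by
  rw [real_inner_comm, inner_cross3, inner_cross3]; ring

lemma inner_cross3_smul (w a b : EuclideanSpace ℝ (Fin 3)) (c d : ℝ) :
    ⟪w, cross3 (c • a) (d • b)⟫ = c * d * ⟪w, cross3 a b⟫ := by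
  simp only [inner_cross3, PiLp.smul_apply, smul_eq_mul]; ring

lemma inner_self_cross3 (w a : EuclideanSpace ℝ (Fin 3)) :
    ⟪a, cross3 w a⟫ = 0 := by
  rw [inner_cross3]; ring

lemma hasDerivAt_norm_of_ne {f : ℝ → EuclideanSpace ℝ (Fin 3)} {f' : EuclideanSpace ℝ (Fin 3)}
    {x : ℝ} (hf : HasDerivAt f f' x) (hx : f x ≠ 0) :
    HasDerivAt (fun s => ‖f s‖) (⟪f x, f'⟫ / ‖f x‖) x := by
  have h0 : ⟪f x, f x⟫ ≠ 0 := by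
    rw [real_inner_self_eq_norm_sq]
    exact pow_ne_zero _ (norm_ne_zero_iff.2 hx)
  have h1 : HasDerivAt (fun s => Real.sqrt ⟪f s, f s⟫)
      ((⟪f x, f'⟫ + ⟪f', f x⟫) / (2 * Real.sqrt ⟪f x, f x⟫)) x :=
    (hf.inner ℝ hf).sqrt h0
  have h2 : (fun s => Real.sqrt ⟪f s, f s⟫) = fun s => ‖f s‖ := by
    funext s; rw [real_inner_self_eq_norm_sq, Real.sqrt_sq (norm_nonneg _)]
  rw [h2] at h1
  convert h1 using 1
  rw [real_inner_self_eq_norm_sq, Real.sqrt_sq (norm_nonneg _), real_inner_comm (f') (f x)]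
  ring

/-- **Three-dimensional bearing dynamics (paper's equation (5)).**
With `Ṙ = V_h - V_a`, `V̇_a = W × V_a`, `R ≠ 0`, `V_a ≠ 0`, writing `r = ‖R‖`,
`v_a = ‖V_a‖`, `v_h = ‖V_h‖` and `θ, φ, ψ` for the undirected angles between `V_a` and
`R`, between `V_h` and `R`, and between `V_a` and `V_h`, at every time with `sin θ ≠ 0`
the bearing `θ` is differentiable with
`θ̇ = (1/(r sin θ)) (v_a sin² θ + v_h (cos φ cos θ - cos ψ))
      - (1/sin θ) ⟨W, e_{V_a} × e_R⟩`. -/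
theorem bearing_dynamics_three_dimensional
    (R V_a V_h W : ℝ → EuclideanSpace ℝ (Fin 3))
    (hR : ∀ t, R t ≠ 0) (hVa : ∀ t, V_a t ≠ 0)
    (hdR : ∀ t, HasDerivAt R (V_h t - V_a t) t)
    (hdVa : ∀ t, HasDerivAt V_a (cross3 (W t) (V_a t)) t) :
    ∀ t, Real.sin (InnerProductGeometry.angle (V_a t) (R t)) ≠ 0 →
      HasDerivAt (fun s => InnerProductGeometry.angle (V_a s) (R s))
        ((1 / (‖R t‖ * Real.sin (InnerProductGeometry.angle (V_a t) (R t)))) *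
            (‖V_a t‖ * Real.sin (InnerProductGeometry.angle (V_a t) (R t)) ^ 2 +
              ‖V_h t‖ *
                (Real.cos (InnerProductGeometry.angle (V_h t) (R t)) *
                    Real.cos (InnerProductGeometry.angle (V_a t) (R t)) -
                  Real.cos (InnerProductGeometry.angle (V_a t) (V_h t)))) -
          (1 / Real.sin (InnerProductGeometry.angle (V_a t) (R t))) *
            (inner ℝ (W t) (cross3 (‖V_a t‖⁻¹ • V_a t) (‖R t‖⁻¹ • R t)) : ℝ)) t := by
  intro t hst
  have hrt : ‖R t‖ ≠ 0 := norm_ne_zero_iff.2 (hR t)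
  have hvat : ‖V_a t‖ ≠ 0 := norm_ne_zero_iff.2 (hVa t)
  -- derivative of the norms
  have hnR : HasDerivAt (fun s => ‖R s‖) (⟪R t, V_h t - V_a t⟫ / ‖R t‖) t :=
    hasDerivAt_norm_of_ne (hdR t) (hR t)
  have hnVa : HasDerivAt (fun s => ‖V_a s‖) 0 t := by
    have h := hasDerivAt_norm_of_ne (hdVa t) (hVa t)
    rwa [inner_self_cross3, zero_div] at h
  -- derivative of the inner product
  have hip : HasDerivAt (fun s => ⟪V_a s, R s⟫)
      (⟪V_a t, V_h t - V_a t⟫ + ⟪cross3 (W t) (V_a t), R t⟫) t :=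
    (hdVa t).inner ℝ (hdR t)
  have hden : HasDerivAt (fun s => ‖V_a s‖ * ‖R s‖)
      (0 * ‖R t‖ + ‖V_a t‖ * (⟪R t, V_h t - V_a t⟫ / ‖R t‖)) t := hnVa.mul hnR
  have hdenne : ‖V_a t‖ * ‖R t‖ ≠ 0 := mul_ne_zero hvat hrt
  have hc : HasDerivAt (fun s => ⟪V_a s, R s⟫ / (‖V_a s‖ * ‖R s‖))
      (((⟪V_a t, V_h t - V_a t⟫ + ⟪cross3 (W t) (V_a t), R t⟫) * (‖V_a t‖ * ‖R t‖)
        - ⟪V_a t, R t⟫ * (0 * ‖R t‖ + ‖V_a t‖ * (⟪R t, V_h t - V_a t⟫ / ‖R t‖)))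
        / (‖V_a t‖ * ‖R t‖) ^ 2) t := hip.div hden hdenne
  set ct : ℝ := ⟪V_a t, R t⟫ / (‖V_a t‖ * ‖R t‖) with hct
  have hsa : Real.sin (InnerProductGeometry.angle (V_a t) (R t)) = Real.sqrt (1 - ct ^ 2) := by
    rw [InnerProductGeometry.angle, Real.sin_arccos]
  have hsqne : Real.sqrt (1 - ct ^ 2) ≠ 0 := by rwa [hsa] at hst
  have hne1 : ct ≠ 1 := by intro h; apply hsqne; rw [h]; simp
  have hnen1 : ct ≠ -1 := by intro h; apply hsqne; rw [h]; simp
  have hθ : HasDerivAt (fun s => InnerProductGeometry.angle (V_a s) (R s))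
      (-(1 / Real.sqrt (1 - ct ^ 2)) *
        (((⟪V_a t, V_h t - V_a t⟫ + ⟪cross3 (W t) (V_a t), R t⟫) * (‖V_a t‖ * ‖R t‖)
        - ⟪V_a t, R t⟫ * (0 * ‖R t‖ + ‖V_a t‖ * (⟪R t, V_h t - V_a t⟫ / ‖R t‖)))
        / (‖V_a t‖ * ‖R t‖) ^ 2)) t := by
    have := (Real.hasDerivAt_arccos hnen1 hne1).comp t hc
    simpa [InnerProductGeometry.angle, Function.comp_def] using this
  convert hθ using 1
  have hab := abs_real_inner_div_norm_mul_norm_le_one (V_a t) (R t)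
  have hct2 : (0:ℝ) ≤ 1 - ct ^ 2 := by
    have h2 : ct ^ 2 ≤ 1 := by
      rw [← sq_abs]; exact pow_le_one₀ (abs_nonneg _) hab
    linarith
  have hS2 : Real.sin (InnerProductGeometry.angle (V_a t) (R t)) ^ 2 = 1 - ct ^ 2 := by
    rw [hsa, Real.sq_sqrt hct2]
  rw [hS2, hsa, InnerProductGeometry.cos_angle (V_h t) (R t),
    InnerProductGeometry.cos_angle (V_a t) (R t), InnerProductGeometry.cos_angle (V_a t) (V_h t),
    inner_cross3_smul, cross3_inner_cycle, inner_sub_right, inner_sub_right,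
    real_inner_self_eq_norm_sq]
  have e1 : (inner ℝ (R t) (V_a t) : ℝ) = inner ℝ (V_a t) (R t) := real_inner_comm _ _
  have e2 : (inner ℝ (R t) (V_h t) : ℝ) = inner ℝ (V_h t) (R t) := real_inner_comm _ _
  rw [e1, e2, hct] at *
  rw [hct] at hsqne ⊢
  by_cases hvh : V_h t = 0
  · rw [hvh]
    simp only [inner_zero_left, inner_zero_right, norm_zero, zero_mul, mul_zero, zero_div,
      zero_sub, sub_zero, zero_add, add_zero, neg_zero]
    generalize (inner ℝ (W t) (cross3 (V_a t) (R t)) : ℝ) = d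
    generalize hp : (inner ℝ (V_a t) (R t) : ℝ) = p at hsqne ⊢
    generalize hva2 : ‖V_a t‖ = va at hvat hsqne ⊢
    generalize hr2 : ‖R t‖ = r at hrt hsqne ⊢
    generalize hSg : Real.sqrt (1 - (p / (va * r)) ^ 2) = S at hsqne ⊢
    field_simp
    ring
  · have hvhn : ‖V_h t‖ ≠ 0 := norm_ne_zero_iff.2 hvh
    generalize (inner ℝ (W t) (cross3 (V_a t) (R t)) : ℝ) = d
    generalize (inner ℝ (V_a t) (V_h t) : ℝ) = q
    generalize (inner ℝ (V_h t) (R t) : ℝ) = m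
    generalize hp : (inner ℝ (V_a t) (R t) : ℝ) = p at hsqne ⊢
    generalize hva2 : ‖V_a t‖ = va at hvat hsqne ⊢
    generalize hvh2 : ‖V_h t‖ = vh at hvhn ⊢
    generalize hr2 : ‖R t‖ = r at hrt hsqne ⊢
    generalize hSg : Real.sqrt (1 - (p / (va * r)) ^ 2) = S at hsqne ⊢
    field_simp
    ring
end
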